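/- (Existence and uniqueness for problem (D')) For every tax vector w : Z → ℝ, the optimization problem (D'): minimize G(U) + H(V) over U, V ∈ ℝ^{X×Y} subject to U_{xy} + V_{xy} ≥ Φ_{xy} − w_{z(y)} for all (x,y) ∈ X×Y, has an optimal solution, and this optimal solution is unique. -/

import Mathlib

open MeasureTheory

noncomputable section

variable {X Y Z : Type*} [Fintype X] [Fintype Y] [Fintype Z] [DecidableEq Z]
  [Nonempty X] [Nonempty Y]

/-- Extension `Û` of systematic utilities: the outside option `y₀` (encoded `none`)
gets utility `0`. -/
def Uhat (U : X → Y → ℝ) (x : X) (o : Option Y) : ℝ := o.elim 0 (U x)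

/-- Extension `V̂` of systematic utilities: the outside option `x₀` (encoded `none`)
gets utility `0`. -/
def Vhat (V : X → Y → ℝ) (y : Y) (o : Option X) : ℝ := o.elim 0 (fun x => V x y)

/-- Worker-side welfare `G(U) = Σ_x n_x ∫ max_{y ∈ Y₀} (Û_{xy} + ε_y) dP_x(ε)`. -/
def Gfun (n : X → ℝ) (P : X → Measure (Option Y → ℝ)) (U : X → Y → ℝ) : ℝ :=
  ∑ x, n x * ∫ ε, (Finset.univ.sup' Finset.univ_nonempty
    fun y : Option Y => Uhat U x y + ε y) ∂(P x)

/-- Slot-side welfare `H(V) = Σ_y m_y ∫ max_{x ∈ X₀} (V̂_{xy} + η_x) dQ_y(η)`. -/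
def Hfun (m : Y → ℝ) (Q : Y → Measure (Option X → ℝ)) (V : X → Y → ℝ) : ℝ :=
  ∑ y, m y * ∫ η, (Finset.univ.sup' Finset.univ_nonempty
    fun x : Option X => Vhat V y x + η x) ∂(Q y)

/-- Choice probability `p_x(y; U)` of a type-`x` worker choosing alternative `y ∈ Y₀`. -/
def cp (P : X → Measure (Option Y → ℝ)) (U : X → Y → ℝ) (x : X) (y : Option Y) : ℝ :=
  ((P x) {ε | ∀ y', y' ≠ y → Uhat U x y' + ε y' < Uhat U x y + ε y}).toReal

/-- Choice probability `q_y(x; V)` of a type-`y` slot choosing alternative `x ∈ X₀`. -/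
def cq (Q : Y → Measure (Option X → ℝ)) (V : X → Y → ℝ) (y : Y) (x : Option X) : ℝ :=
  ((Q y) {η | ∀ x', x' ≠ x → Vhat V y x' + η x' < Vhat V y x + η x}).toReal

/-- Population constraint of a matching `μ : T → ℝ` (with `T = X₀ × Y₀ ∖ {(x₀,y₀)}`,
encoded as `μ : Option X → Option Y → ℝ` with the `(none, none)` entry irrelevant). -/
def PopCon (n : X → ℝ) (m : Y → ℝ) (μ : Option X → Option Y → ℝ) : Prop :=
  (∀ x, ∑ o : Option Y, μ (some x) o = n x) ∧ (∀ y, ∑ o : Option X, μ o (some y) = m y)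

/-- Total mass of matches in region `z`. -/
def regionMass (zm : Y → Z) (μ : Option X → Option Y → ℝ) (z : Z) : ℝ :=
  ∑ x : X, ∑ y : Y, if zm y = z then μ (some x) (some y) else 0

/-- Regional constraint: each region's mass lies between its floor and ceiling. -/
def RegionCon (zm : Y → Z) (ol ou : Z → ℝ) (μ : Option X → Option Y → ℝ) : Prop :=
  ∀ z, ol z ≤ regionMass zm μ z ∧ regionMass zm μ z ≤ ou z

/-- Market clearing: `μ_{xy} = n_x p_x(y;U) = m_y q_y(x;V)` (with the obvious one-sided
conditions for the outside options). -/
def MarketClearing (n : X → ℝ) (m : Y → ℝ) (P : X → Measure (Option Y → ℝ))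
    (Q : Y → Measure (Option X → ℝ)) (μ : Option X → Option Y → ℝ)
    (U V : X → Y → ℝ) : Prop :=
  (∀ x y, μ (some x) (some y) = n x * cp P U x (some y) ∧
    μ (some x) (some y) = m y * cq Q V y (some x)) ∧
  (∀ x, μ (some x) none = n x * cp P U x none) ∧
  (∀ y, μ none (some y) = m y * cq Q V y none)

/-- Aggregate equilibrium with regional constraints. -/
def IsAE (n : X → ℝ) (m : Y → ℝ) (P : X → Measure (Option Y → ℝ))
    (Q : Y → Measure (Option X → ℝ)) (Φ : X → Y → ℝ) (zm : Y → Z) (ol ou : Z → ℝ)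
    (μ : Option X → Option Y → ℝ) (U V : X → Y → ℝ) (w : Z → ℝ) : Prop :=
  PopCon n m μ ∧
  (∀ x y, U x y + V x y ≥ Φ x y - w (zm y)) ∧
  MarketClearing n m P Q μ U V ∧
  RegionCon zm ol ou μ

/-- Efficient aggregate equilibrium: an AE satisfying complementary slackness. -/
def IsEAE (n : X → ℝ) (m : Y → ℝ) (P : X → Measure (Option Y → ℝ))
    (Q : Y → Measure (Option X → ℝ)) (Φ : X → Y → ℝ) (zm : Y → Z) (ol ou : Z → ℝ)
    (μ : Option X → Option Y → ℝ) (U V : X → Y → ℝ) (w : Z → ℝ) : Prop :=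
  IsAE n m P Q Φ zm ol ou μ U V w ∧
  ∀ z, (0 < w z → regionMass zm μ z = ou z) ∧ (w z < 0 → regionMass zm μ z = ol z)

/-- Feasibility for problem (D). -/
def FeasD (Φ : X → Y → ℝ) (zm : Y → Z) (U V : X → Y → ℝ) (wb wl : Z → ℝ) : Prop :=
  (∀ z, 0 ≤ wb z) ∧ (∀ z, 0 ≤ wl z) ∧
  ∀ x y, U x y + V x y ≥ Φ x y - wb (zm y) + wl (zm y)

/-- Objective of problem (D). -/
def objD (n : X → ℝ) (m : Y → ℝ) (P : X → Measure (Option Y → ℝ))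
    (Q : Y → Measure (Option X → ℝ)) (ol ou : Z → ℝ)
    (U V : X → Y → ℝ) (wb wl : Z → ℝ) : ℝ :=
  Gfun n P U + Hfun m Q V + ∑ z, ou z * wb z - ∑ z, ol z * wl z

/-- Optimality for problem (D): feasible and minimizing the objective among
feasible points. -/
def IsOptD (n : X → ℝ) (m : Y → ℝ) (P : X → Measure (Option Y → ℝ))
    (Q : Y → Measure (Option X → ℝ)) (Φ : X → Y → ℝ) (zm : Y → Z) (ol ou : Z → ℝ)
    (U V : X → Y → ℝ) (wb wl : Z → ℝ) : Prop :=
  FeasD Φ zm U V wb wl ∧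
  ∀ U' V' wb' wl', FeasD Φ zm U' V' wb' wl' →
    objD n m P Q ol ou U V wb wl ≤ objD n m P Q ol ou U' V' wb' wl'

/-- Legendre–Fenchel conjugate `G*(μ)`. -/
def Gstar (n : X → ℝ) (P : X → Measure (Option Y → ℝ))
    (μ : Option X → Option Y → ℝ) : ℝ :=
  ⨆ U : X → Y → ℝ, (∑ x, ∑ y, μ (some x) (some y) * U x y - Gfun n P U)

/-- Legendre–Fenchel conjugate `H*(μ)`. -/
def Hstar (m : Y → ℝ) (Q : Y → Measure (Option X → ℝ))
    (μ : Option X → Option Y → ℝ) : ℝ :=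
  ⨆ V : X → Y → ℝ, (∑ x, ∑ y, μ (some x) (some y) * V x y - Hfun m Q V)

/-- Social welfare `W(μ) = Σ_{x,y} μ_{xy} Φ_{xy} − G*(μ) − H*(μ)`. -/
def SW (n : X → ℝ) (m : Y → ℝ) (P : X → Measure (Option Y → ℝ))
    (Q : Y → Measure (Option X → ℝ)) (Φ : X → Y → ℝ)
    (μ : Option X → Option Y → ℝ) : ℝ :=
  ∑ x, ∑ y, μ (some x) (some y) * Φ x y - Gstar n P μ - Hstar m Q μ

/-- A feasible matching: nonnegative, satisfying population and regional constraints. -/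
def FeasMatch (n : X → ℝ) (m : Y → ℝ) (zm : Y → Z) (ol ou : Z → ℝ)
    (μ : Option X → Option Y → ℝ) : Prop :=
  (∀ x y, 0 ≤ μ (some x) (some y)) ∧ (∀ x, 0 ≤ μ (some x) none) ∧
  (∀ y, 0 ≤ μ none (some y)) ∧ PopCon n m μ ∧ RegionCon zm ol ou μ

set_option linter.unusedSectionVars false
section Helpers
open Finset


variable {κ : Type*} [Fintype κ] [Nonempty κ]

private def esup (c : κ → ℝ) (ε : κ → ℝ) : ℝ :=
  Finset.univ.sup' Finset.univ_nonempty fun a => c a + ε a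

private def asup (ε : κ → ℝ) : ℝ :=
  Finset.univ.sup' Finset.univ_nonempty fun a => |ε a|

private lemma le_esup (c ε : κ → ℝ) (a : κ) : c a + ε a ≤ esup c ε :=
  Finset.le_sup' (fun a => c a + ε a) (mem_univ a)

private lemma esup_le {c ε : κ → ℝ} {b : ℝ} (h : ∀ a, c a + ε a ≤ b) : esup c ε ≤ b :=
  Finset.sup'_le _ _ fun a _ => h a

private lemma abs_le_asup (ε : κ → ℝ) (a : κ) : |ε a| ≤ asup ε :=
  Finset.le_sup' (fun a => |ε a|) (mem_univ a)

private lemma asup_nonneg (ε : κ → ℝ) : 0 ≤ asup ε :=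
  le_trans (abs_nonneg (ε (Classical.arbitrary κ))) (abs_le_asup ε _)

private lemma esup_cont (c : κ → ℝ) : Continuous (esup c) :=
  Continuous.finset_sup'_apply _ fun a _ => continuous_const.add (continuous_apply a)

private lemma asup_cont : Continuous (asup (κ := κ)) :=
  Continuous.finset_sup'_apply _ fun a _ => (continuous_apply a).abs

variable {μ : Measure (κ → ℝ)} [IsProbabilityMeasure μ]

private lemma esup_integrable (hint : Integrable asup μ) (c : κ → ℝ) :
    Integrable (esup c) μ := by
  refine Integrable.mono'
    (g := fun ε => (Finset.univ.sup' Finset.univ_nonempty fun a => |c a|) + asup ε)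
    ((integrable_const (Finset.univ.sup' Finset.univ_nonempty fun a => |c a|)).add hint)
    (esup_cont c).aestronglyMeasurable (Filter.Eventually.of_forall fun ε => ?_)
  rw [Real.norm_eq_abs, abs_le]
  constructor
  · have h1 := le_esup c ε (Classical.arbitrary κ)
    have h2 : |c (Classical.arbitrary κ)| ≤ Finset.univ.sup' Finset.univ_nonempty fun a => |c a| :=
      Finset.le_sup' (fun a => |c a|) (mem_univ _)
    have h3 := abs_le_asup ε (Classical.arbitrary κ)
    have h4 := neg_abs_le (c (Classical.arbitrary κ))
    have h5 := neg_abs_le (ε (Classical.arbitrary κ))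
    linarith
  · refine esup_le fun a => ?_
    have h2 : |c a| ≤ Finset.univ.sup' Finset.univ_nonempty fun a => |c a| :=
      Finset.le_sup' (fun a => |c a|) (mem_univ _)
    have h3 := abs_le_asup ε a
    have := le_abs_self (c a); have := le_abs_self (ε a)
    linarith

private lemma asup_integral_nonneg : 0 ≤ ∫ ε, asup (κ := κ) ε ∂μ :=
  integral_nonneg fun ε => asup_nonneg ε

/-- lower bound on the expected max -/
private lemma le_emax (hint : Integrable asup μ) (c : κ → ℝ) (a : κ) :
    c a - ∫ ε, asup ε ∂μ ≤ ∫ ε, esup c ε ∂μ := by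
  have h : ∫ ε, (c a - asup ε) ∂μ ≤ ∫ ε, esup c ε ∂μ := by
    refine integral_mono ((integrable_const (c a)).sub hint) (esup_integrable hint c) fun ε => ?_
    have h1 := le_esup c ε a
    have h2 := abs_le_asup ε a
    have h3 := neg_abs_le (ε a)
    simp only [Pi.sub_apply]
    linarith
  rwa [integral_sub (integrable_const _) hint, integral_const, probReal_univ,
    one_smul] at h

/-- continuity of expected max in c -/
private lemma emax_cont (hint : Integrable asup μ) :
    Continuous fun c : κ → ℝ => ∫ ε, esup c ε ∂μ := by
  refine (LipschitzWith.of_dist_le_mul (K := 1) fun c c' => ?_).continuous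
  rw [Real.dist_eq]
  push_cast
  rw [one_mul]
  have key : ∀ ε, |esup c ε - esup c' ε| ≤ dist c c' := by
    intro ε
    rw [abs_le]
    constructor
    · rw [neg_le, neg_sub]
      refine sub_le_iff_le_add.2 (esup_le fun a => ?_)
      have h1 := le_esup c ε a
      have h2 : dist (c' a) (c a) ≤ dist c' c := dist_le_pi_dist c' c a
      rw [Real.dist_eq] at h2
      have h3 := le_abs_self (c' a - c a)
      rw [dist_comm c c']
      linarith
    · refine sub_le_iff_le_add.2 (esup_le fun a => ?_)
      have h1 := le_esup c' ε a
      have h2 : dist (c a) (c' a) ≤ dist c c' := dist_le_pi_dist c c' a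
      rw [Real.dist_eq] at h2
      have h3 := le_abs_self (c a - c' a)
      linarith
  calc |(∫ ε, esup c ε ∂μ) - ∫ ε, esup c' ε ∂μ|
      = |∫ ε, (esup c ε - esup c' ε) ∂μ| := by
        rw [integral_sub (esup_integrable hint c) (esup_integrable hint c')]
    _ ≤ ∫ ε, |esup c ε - esup c' ε| ∂μ := by
        simpa [Real.norm_eq_abs] using
          norm_integral_le_integral_norm (fun ε => esup c ε - esup c' ε)
    _ ≤ ∫ _, dist c c' ∂μ := by
        refine integral_mono ?_ (integrable_const _) key
        exact ((esup_integrable hint c).sub (esup_integrable hint c')).abs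
    _ = dist c c' := by simp

/-- midpoint convexity of expected max -/
private lemma emax_mid_le (hint : Integrable asup μ) (c c' : κ → ℝ) :
    ∫ ε, esup (fun a => (c a + c' a) / 2) ε ∂μ
      ≤ ((∫ ε, esup c ε ∂μ) + ∫ ε, esup c' ε ∂μ) / 2 := by
  have h : ∫ ε, esup (fun a => (c a + c' a) / 2) ε ∂μ
      ≤ ∫ ε, (esup c ε + esup c' ε) / 2 ∂μ := by
    refine integral_mono (esup_integrable hint _)
      (((esup_integrable hint c).add (esup_integrable hint c')).div_const 2) fun ε => ?_
    refine esup_le fun a => ?_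
    have h1 := le_esup c ε a
    have h2 := le_esup c' ε a
    linarith
  rwa [integral_div, integral_add (esup_integrable hint c) (esup_integrable hint c')] at h

/-- strict midpoint convexity -/
private lemma emax_strict (hint : Integrable asup μ) (hvol : (volume : Measure (κ → ℝ)) ≪ μ)
    {c c' : κ → ℝ} {a₀ a₁ : κ} (hne : a₀ ≠ a₁) (h0 : c a₀ = 0) (h0' : c' a₀ = 0)
    (hlt : c a₁ < c' a₁)
    (heq : ∫ ε, esup (fun a => (c a + c' a) / 2) ε ∂μ
      = ((∫ ε, esup c ε ∂μ) + ∫ ε, esup c' ε ∂μ) / 2) : False := by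
  classical
  set mid : κ → ℝ := fun a => (c a + c' a) / 2 with hmid
  set φ : (κ → ℝ) → ℝ := fun ε => esup c ε + esup c' ε - 2 * esup mid ε with hφ
  have hφnn : ∀ ε, 0 ≤ φ ε := by
    intro ε
    obtain ⟨b, -, hb⟩ := Finset.exists_mem_eq_sup' (Finset.univ_nonempty)
      (fun a => mid a + ε a)
    have hb' : esup mid ε = mid b + ε b := hb
    have h1 := le_esup c ε b
    have h2 := le_esup c' ε b
    rw [show φ ε = esup c ε + esup c' ε - 2 * esup mid ε from rfl, hb']
    have hmb : mid b = (c b + c' b) / 2 := rfl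
    linarith
  have hφint : Integrable φ μ := by
    exact ((esup_integrable hint c).add (esup_integrable hint c')).sub
      ((esup_integrable hint mid).const_mul 2)
  have hφ0 : ∫ ε, φ ε ∂μ = 0 := by
    have h1 : Integrable (fun ε => esup c ε + esup c' ε) μ :=
      (esup_integrable hint c).add (esup_integrable hint c')
    have h2 : Integrable (fun ε => 2 * esup mid ε) μ :=
      (esup_integrable hint mid).const_mul 2
    simp only [hφ]
    rw [integral_sub h1 h2,
      integral_add (esup_integrable hint c) (esup_integrable hint c'),
      integral_const_mul]
    rw [heq]; ring
  have hae : φ =ᵐ[μ] 0 := (integral_eq_zero_iff_of_nonneg hφnn hφint).1 hφ0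
  have hnull : μ {ε | φ ε ≠ 0} = 0 := by
    have := hae
    rw [Filter.EventuallyEq, ae_iff] at this
    simpa using this
  have hvnull : volume {ε | φ ε ≠ 0} = 0 := hvol hnull
  -- the open set where φ > 0
  set O : Set (κ → ℝ) := {ε | (∀ a, a ≠ a₀ → c a + ε a < c a₀ + ε a₀) ∧
    (∀ a, a ≠ a₁ → c' a + ε a < c' a₁ + ε a₁)} with hO
  have hOsub : O ⊆ {ε | φ ε ≠ 0} := by
    intro ε ⟨hε1, hε2⟩
    obtain ⟨b, -, hb⟩ := Finset.exists_mem_eq_sup' (Finset.univ_nonempty)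
      (fun a => mid a + ε a)
    have hb' : esup mid ε = mid b + ε b := hb
    rcases ne_or_eq b a₀ with hba | hba
    · -- then esup c ε > c b + ε b, so φ > 0
      have h1 : c b + ε b < esup c ε := lt_of_lt_of_le (hε1 b hba) (le_esup c ε a₀)
      have h2 := le_esup c' ε b
      have : 0 < φ ε := by
        rw [show φ ε = esup c ε + esup c' ε - 2 * esup mid ε from rfl, hb']
        have hmb : mid b = (c b + c' b) / 2 := rfl
        linarith
      exact ne_of_gt this
    · have hbb : b ≠ a₁ := hba ▸ hne
      have h1 : c' b + ε b < esup c' ε := lt_of_lt_of_le (hε2 b hbb) (le_esup c' ε a₁)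
      have h2 := le_esup c ε b
      have : 0 < φ ε := by
        rw [show φ ε = esup c ε + esup c' ε - 2 * esup mid ε from rfl, hb']
        have hmb : mid b = (c b + c' b) / 2 := rfl
        linarith
      exact ne_of_gt this
  have hOopen : IsOpen O := by
    have h1 : IsOpen {ε : κ → ℝ | ∀ a, a ≠ a₀ → c a + ε a < c a₀ + ε a₀} := by
      have : {ε : κ → ℝ | ∀ a, a ≠ a₀ → c a + ε a < c a₀ + ε a₀}
          = ⋂ a, {ε : κ → ℝ | a ≠ a₀ → c a + ε a < c a₀ + ε a₀} := by
        ext ε; simp [Set.mem_iInter]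
      rw [this]
      refine isOpen_iInter_of_finite fun a => ?_
      by_cases ha : a = a₀
      · simp [ha]
      · have : {ε : κ → ℝ | a ≠ a₀ → c a + ε a < c a₀ + ε a₀}
            = {ε : κ → ℝ | c a + ε a < c a₀ + ε a₀} := by ext ε; simp [ha]
        rw [this]
        exact isOpen_lt (continuous_const.add (continuous_apply a))
          (continuous_const.add (continuous_apply a₀))
    have h2 : IsOpen {ε : κ → ℝ | ∀ a, a ≠ a₁ → c' a + ε a < c' a₁ + ε a₁} := by
      have : {ε : κ → ℝ | ∀ a, a ≠ a₁ → c' a + ε a < c' a₁ + ε a₁}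
          = ⋂ a, {ε : κ → ℝ | a ≠ a₁ → c' a + ε a < c' a₁ + ε a₁} := by
        ext ε; simp [Set.mem_iInter]
      rw [this]
      refine isOpen_iInter_of_finite fun a => ?_
      by_cases ha : a = a₁
      · simp [ha]
      · have : {ε : κ → ℝ | a ≠ a₁ → c' a + ε a < c' a₁ + ε a₁}
            = {ε : κ → ℝ | c' a + ε a < c' a₁ + ε a₁} := by ext ε; simp [ha]
        rw [this]
        exact isOpen_lt (continuous_const.add (continuous_apply a))
          (continuous_const.add (continuous_apply a₁))
    exact h1.inter h2
  have hOne : O.Nonempty := by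
    set t : ℝ := (c a₁ + c' a₁) / 2 with ht
    refine ⟨fun a => if a = a₁ then 0 else if a = a₀ then t else
      -(|c a| + |c' a| + |t| + |c' a₁| + 1), ?_, ?_⟩
    · intro a ha
      by_cases ha1 : a = a₁
      · subst ha1
        simp only [if_pos rfl, if_neg hne, h0, if_true, ite_true, eq_self_iff_true, abs_zero]
        simp only [ht]; linarith
      · simp only [if_neg ha1, if_neg ha, h0, if_neg hne, if_pos rfl, if_true, ite_true, eq_self_iff_true, abs_zero]
        have h1 := le_abs_self (c a)
        have h2 := abs_nonneg (c' a)
        have h3 := neg_abs_le t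
        have h4 := abs_nonneg (c' a₁)
        linarith
    · intro a ha
      simp only [if_pos rfl, if_true, ite_true, eq_self_iff_true, abs_zero]
      by_cases ha0 : a = a₀
      · subst ha0
        simp only [if_neg ha, if_pos rfl, h0', if_true, ite_true, eq_self_iff_true, abs_zero]
        simp only [ht]; linarith
      · simp only [if_neg ha, if_neg ha0, if_true, ite_true, eq_self_iff_true, abs_zero]
        have h1 := le_abs_self (c' a)
        have h2 := abs_nonneg (c a)
        have h3 := abs_nonneg t
        have h4 := neg_abs_le (c' a₁)
        linarith
  have hp : 0 < volume O := hOopen.measure_pos _ hOne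
  have hz : volume O = 0 := measure_mono_null hOsub hvnull
  exact hp.ne' hz



private lemma Gfun_eq (n : X → ℝ) (P : X → Measure (Option Y → ℝ)) (U : X → Y → ℝ) :
    Gfun n P U = ∑ x, n x * ∫ ε, esup (Uhat U x) ε ∂(P x) := rfl

private lemma Hfun_eq (m : Y → ℝ) (Q : Y → Measure (Option X → ℝ)) (V : X → Y → ℝ) :
    Hfun m Q V = ∑ y, m y * ∫ η, esup (Vhat V y) η ∂(Q y) := rfl

private lemma Uhat_mid (U U' : X → Y → ℝ) (x : X) :
    Uhat (fun x y => (U x y + U' x y)/2) x = fun a => (Uhat U x a + Uhat U' x a)/2 := by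
  funext a; cases a <;> simp [Uhat]

private lemma Vhat_mid (V V' : X → Y → ℝ) (y : Y) :
    Vhat (fun x y => (V x y + V' x y)/2) y = fun a => (Vhat V y a + Vhat V' y a)/2 := by
  funext a; cases a <;> simp [Vhat]

private lemma Uhat_cont (x : X) : Continuous fun U : X → Y → ℝ => Uhat U x := by
  refine continuous_pi fun a => ?_
  cases a with
  | none => exact continuous_const
  | some y => exact (continuous_apply y).comp (continuous_apply x)

private lemma Vhat_cont (y : Y) : Continuous fun V : X → Y → ℝ => Vhat V y := by
  refine continuous_pi fun a => ?_
  cases a with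
  | none => exact continuous_const
  | some x => exact (continuous_apply y).comp (continuous_apply x)

end Helpers


/-- Existence and uniqueness for problem (D'). For every tax vector
`w : Z → ℝ`, the problem of minimizing `G(U) + H(V)` subject to
`U_{xy} + V_{xy} ≥ Φ_{xy} − w_{z(y)}` has a unique optimal solution. -/
theorem stmt17
    (n : X → ℝ) (m : Y → ℝ) (hn : ∀ x, 0 < n x) (hm : ∀ y, 0 < m y)
    (P : X → Measure (Option Y → ℝ)) (Q : Y → Measure (Option X → ℝ))
    [∀ x, IsProbabilityMeasure (P x)] [∀ y, IsProbabilityMeasure (Q y)]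
    (hPac : ∀ x, P x ≪ (volume : Measure (Option Y → ℝ)))
    (hPpos : ∀ x, (volume : Measure (Option Y → ℝ)) ≪ P x)
    (hQac : ∀ y, Q y ≪ (volume : Measure (Option X → ℝ)))
    (hQpos : ∀ y, (volume : Measure (Option X → ℝ)) ≪ Q y)
    (hPint : ∀ x, Integrable (fun ε : Option Y → ℝ =>
      Finset.univ.sup' Finset.univ_nonempty fun a => |ε a|) (P x))
    (hQint : ∀ y, Integrable (fun η : Option X → ℝ =>
      Finset.univ.sup' Finset.univ_nonempty fun a => |η a|) (Q y))
    (Φ : X → Y → ℝ) (zm : Y → Z) (w : Z → ℝ) :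
    ∃! p : (X → Y → ℝ) × (X → Y → ℝ),
      (∀ x y, p.1 x y + p.2 x y ≥ Φ x y - w (zm y)) ∧
      ∀ U' V' : X → Y → ℝ, (∀ x y, U' x y + V' x y ≥ Φ x y - w (zm y)) →
        Gfun n P p.1 + Hfun m Q p.2 ≤ Gfun n P U' + Hfun m Q V' := by
  classical
  have hABn : ∀ z : Option Y, True := fun _ => trivial
  set F : ((X → Y → ℝ) × (X → Y → ℝ)) → ℝ := fun p => Gfun n P p.1 + Hfun m Q p.2 with hF
  -- continuity of the objective
  have hGcont : Continuous fun U : X → Y → ℝ => Gfun n P U := by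
    have he : (fun U : X → Y → ℝ => Gfun n P U)
        = fun U => ∑ x, n x * ∫ ε, esup (Uhat U x) ε ∂(P x) := by
      funext U; exact Gfun_eq n P U
    rw [he]
    refine continuous_finset_sum _ fun x _ => continuous_const.mul ?_
    exact (emax_cont (hPint x)).comp (Uhat_cont x)
  have hHcont : Continuous fun V : X → Y → ℝ => Hfun m Q V := by
    have he : (fun V : X → Y → ℝ => Hfun m Q V)
        = fun V => ∑ y, m y * ∫ η, esup (Vhat V y) η ∂(Q y) := by
      funext V; exact Hfun_eq m Q V
    rw [he]
    refine continuous_finset_sum _ fun y _ => continuous_const.mul ?_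
    exact (emax_cont (hQint y)).comp (Vhat_cont y)
  have hFcont : Continuous F := (hGcont.comp continuous_fst).add (hHcont.comp continuous_snd)
  -- lower bounds
  have hG_lb : ∀ (U : X → Y → ℝ) (s : X → Option Y),
      (∑ x, n x * (Uhat U x (s x) - ∫ ε, asup ε ∂(P x))) ≤ Gfun n P U := by
    intro U s
    rw [Gfun_eq]
    exact Finset.sum_le_sum fun x _ =>
      mul_le_mul_of_nonneg_left (le_emax (hPint x) (Uhat U x) (s x)) (hn x).le
  have hH_lb : ∀ (V : X → Y → ℝ) (s : Y → Option X),
      (∑ y, m y * (Vhat V y (s y) - ∫ η, asup η ∂(Q y))) ≤ Hfun m Q V := by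
    intro V s
    rw [Hfun_eq]
    exact Finset.sum_le_sum fun y _ =>
      mul_le_mul_of_nonneg_left (le_emax (hQint y) (Vhat V y) (s y)) (hm y).le
  set Bn : ℝ := ∑ x, n x * ∫ ε, asup ε ∂(P x) with hBn
  set Bm : ℝ := ∑ y, m y * ∫ η, asup η ∂(Q y) with hBm
  have hG_lb0 : ∀ U : X → Y → ℝ, -Bn ≤ Gfun n P U := by
    intro U
    have h := hG_lb U (fun _ => none)
    have h2 : (∑ x, n x * (Uhat U x none - ∫ ε, asup ε ∂(P x))) = -Bn := by
      rw [hBn, ← Finset.sum_neg_distrib]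
      refine Finset.sum_congr rfl fun x _ => ?_
      have : Uhat U x none = 0 := rfl
      rw [this]; ring
    linarith
  have hH_lb0 : ∀ V : X → Y → ℝ, -Bm ≤ Hfun m Q V := by
    intro V
    have h := hH_lb V (fun _ => none)
    have h2 : (∑ y, m y * (Vhat V y none - ∫ η, asup η ∂(Q y))) = -Bm := by
      rw [hBm, ← Finset.sum_neg_distrib]
      refine Finset.sum_congr rfl fun y _ => ?_
      have : Vhat V y none = 0 := rfl
      rw [this]; ring
    linarith
  have hG_co : ∀ (U : X → Y → ℝ) (x0 : X) (y0 : Y), n x0 * U x0 y0 - Bn ≤ Gfun n P U := by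
    intro U x0 y0
    have h := hG_lb U (fun x => if x = x0 then some y0 else none)
    have h2 : (∑ x, n x * (Uhat U x (if x = x0 then some y0 else none) - ∫ ε, asup ε ∂(P x)))
        = n x0 * U x0 y0 - Bn := by
      have hcg : ∀ x : X, n x * (Uhat U x (if x = x0 then some y0 else none) - ∫ ε, asup ε ∂(P x))
          = (if x = x0 then n x * U x y0 else 0) - n x * ∫ ε, asup ε ∂(P x) := by
        intro x
        by_cases hx : x = x0
        · have : Uhat U x (if x = x0 then some y0 else none) = U x y0 := by rw [if_pos hx]; rfl
          rw [this, if_pos hx]; ring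
        · have : Uhat U x (if x = x0 then some y0 else none) = 0 := by rw [if_neg hx]; rfl
          rw [this, if_neg hx]; ring
      rw [Finset.sum_congr rfl fun x _ => hcg x, Finset.sum_sub_distrib,
        Finset.sum_ite_eq' Finset.univ x0 (fun x => n x * U x y0), if_pos (Finset.mem_univ x0),
        hBn]
    linarith
  have hH_co : ∀ (V : X → Y → ℝ) (x0 : X) (y0 : Y), m y0 * V x0 y0 - Bm ≤ Hfun m Q V := by
    intro V x0 y0
    have h := hH_lb V (fun y => if y = y0 then some x0 else none)
    have h2 : (∑ y, m y * (Vhat V y (if y = y0 then some x0 else none) - ∫ η, asup η ∂(Q y)))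
        = m y0 * V x0 y0 - Bm := by
      have hcg : ∀ y : Y, m y * (Vhat V y (if y = y0 then some x0 else none) - ∫ η, asup η ∂(Q y))
          = (if y = y0 then m y * V x0 y else 0) - m y * ∫ η, asup η ∂(Q y) := by
        intro y
        by_cases hy : y = y0
        · have : Vhat V y (if y = y0 then some x0 else none) = V x0 y := by rw [if_pos hy]; rfl
          rw [this, if_pos hy]; ring
        · have : Vhat V y (if y = y0 then some x0 else none) = 0 := by rw [if_neg hy]; rfl
          rw [this, if_neg hy]; ring
      rw [Finset.sum_congr rfl fun y _ => hcg y, Finset.sum_sub_distrib,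
        Finset.sum_ite_eq' Finset.univ y0 (fun y => m y * V x0 y), if_pos (Finset.mem_univ y0),
        hBm]
    linarith
  -- base feasible point
  set p₀ : (X → Y → ℝ) × (X → Y → ℝ) := (fun _ _ => 0, fun x y => |Φ x y - w (zm y)|) with hp₀
  have hp₀feas : ∀ x y, p₀.1 x y + p₀.2 x y ≥ Φ x y - w (zm y) := by
    intro x y
    simp only [hp₀]
    have := le_abs_self (Φ x y - w (zm y))
    linarith
  set A : ℝ := F p₀ with hA
  set C : Set ((X → Y → ℝ) × (X → Y → ℝ)) :=
    {p | ∀ x y, p.1 x y + p.2 x y ≥ Φ x y - w (zm y)} with hCdef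
  set K : Set ((X → Y → ℝ) × (X → Y → ℝ)) := C ∩ {p | F p ≤ A} with hKdef
  have hp₀K : p₀ ∈ K := ⟨hp₀feas, le_refl A⟩
  have hABnn : 0 ≤ A + (Bn + Bm) := by
    have h1 := hG_lb0 p₀.1
    have h2 := hH_lb0 p₀.2
    have : A = Gfun n P p₀.1 + Hfun m Q p₀.2 := rfl
    linarith
  -- bounds on K
  have hUb : ∀ p ∈ K, ∀ (x : X) (y : Y), p.1 x y ≤ (A + (Bn + Bm)) / n x := by
    intro p hp x y
    have h1 := hG_co p.1 x y
    have h2 := hH_lb0 p.2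
    have h3 : F p ≤ A := hp.2
    have h4 : F p = Gfun n P p.1 + Hfun m Q p.2 := rfl
    rw [le_div_iff₀ (hn x), mul_comm]
    linarith
  have hVb : ∀ p ∈ K, ∀ (x : X) (y : Y), p.2 x y ≤ (A + (Bn + Bm)) / m y := by
    intro p hp x y
    have h1 := hH_co p.2 x y
    have h2 := hG_lb0 p.1
    have h3 : F p ≤ A := hp.2
    have h4 : F p = Gfun n P p.1 + Hfun m Q p.2 := rfl
    rw [le_div_iff₀ (hm y), mul_comm]
    linarith
  set R : ℝ := Finset.univ.sup' Finset.univ_nonempty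
    (fun q : X × Y => |Φ q.1 q.2 - w (zm q.2)| + (A + (Bn + Bm)) / n q.1
      + (A + (Bn + Bm)) / m q.2) with hR
  have hRq : ∀ (x : X) (y : Y),
      |Φ x y - w (zm y)| + (A + (Bn + Bm)) / n x + (A + (Bn + Bm)) / m y ≤ R :=
    fun x y => Finset.le_sup'
      (fun q : X × Y => |Φ q.1 q.2 - w (zm q.2)| + (A + (Bn + Bm)) / n q.1
        + (A + (Bn + Bm)) / m q.2) (Finset.mem_univ (x, y))
  have hdivn : ∀ x : X, 0 ≤ (A + (Bn + Bm)) / n x := fun x => div_nonneg hABnn (hn x).le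
  have hdivm : ∀ y : Y, 0 ≤ (A + (Bn + Bm)) / m y := fun y => div_nonneg hABnn (hm y).le
  have hR0 : 0 ≤ R := by
    obtain ⟨x⟩ := ‹Nonempty X›
    obtain ⟨y⟩ := ‹Nonempty Y›
    have := hRq x y
    have := abs_nonneg (Φ x y - w (zm y))
    have := hdivn x
    have := hdivm y
    linarith
  have habsU : ∀ p ∈ K, ∀ (x : X) (y : Y), |p.1 x y| ≤ R := by
    intro p hp x y
    rw [abs_le]
    constructor
    · have h1 : Φ x y - w (zm y) ≤ p.1 x y + p.2 x y := hp.1 x y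
      have h2 := hVb p hp x y
      have h3 := neg_abs_le (Φ x y - w (zm y))
      have h4 := hRq x y
      have h5 := hdivn x
      linarith
    · have h1 := hUb p hp x y
      have h2 := hRq x y
      have h3 := abs_nonneg (Φ x y - w (zm y))
      have h4 := hdivm y
      linarith
  have habsV : ∀ p ∈ K, ∀ (x : X) (y : Y), |p.2 x y| ≤ R := by
    intro p hp x y
    rw [abs_le]
    constructor
    · have h1 : Φ x y - w (zm y) ≤ p.1 x y + p.2 x y := hp.1 x y
      have h2 := hUb p hp x y
      have h3 := neg_abs_le (Φ x y - w (zm y))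
      have h4 := hRq x y
      have h5 := hdivm y
      linarith
    · have h1 := hVb p hp x y
      have h2 := hRq x y
      have h3 := abs_nonneg (Φ x y - w (zm y))
      have h4 := hdivn x
      linarith
  have hKbdd : Bornology.IsBounded K := by
    rw [isBounded_iff_forall_norm_le]
    refine ⟨R, fun p hp => ?_⟩
    rw [Prod.norm_def]
    refine max_le ?_ ?_
    · rw [pi_norm_le_iff_of_nonneg hR0]
      intro x
      rw [pi_norm_le_iff_of_nonneg hR0]
      intro y
      rw [Real.norm_eq_abs]
      exact habsU p hp x y
    · rw [pi_norm_le_iff_of_nonneg hR0]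
      intro x
      rw [pi_norm_le_iff_of_nonneg hR0]
      intro y
      rw [Real.norm_eq_abs]
      exact habsV p hp x y
  have hCclosed : IsClosed C := by
    have hCeq : C = ⋂ (x : X), ⋂ (y : Y),
        {p : (X → Y → ℝ) × (X → Y → ℝ) | Φ x y - w (zm y) ≤ p.1 x y + p.2 x y} := by
      ext p
      simp only [hCdef, Set.mem_setOf_eq, Set.mem_iInter, ge_iff_le]
    rw [hCeq]
    refine isClosed_iInter fun x => isClosed_iInter fun y => isClosed_le continuous_const ?_
    have c1 : Continuous fun p : (X → Y → ℝ) × (X → Y → ℝ) => p.1 x y :=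
      (continuous_apply y).comp ((continuous_apply x).comp continuous_fst)
    have c2 : Continuous fun p : (X → Y → ℝ) × (X → Y → ℝ) => p.2 x y :=
      (continuous_apply y).comp ((continuous_apply x).comp continuous_snd)
    exact c1.add c2
  have hKclosed : IsClosed K := hCclosed.inter (isClosed_le hFcont continuous_const)
  have hKcompact : IsCompact K := Metric.isCompact_of_isClosed_isBounded hKclosed hKbdd
  obtain ⟨p, hpK, hpmin⟩ := hKcompact.exists_isMinOn ⟨p₀, hp₀K⟩ hFcont.continuousOn
  have hpmin' : ∀ q ∈ K, F p ≤ F q := fun q hq => hpmin hq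
  have hpfeas : ∀ x y, p.1 x y + p.2 x y ≥ Φ x y - w (zm y) := hpK.1
  have hpopt : ∀ U' V' : X → Y → ℝ, (∀ x y, U' x y + V' x y ≥ Φ x y - w (zm y)) →
      Gfun n P p.1 + Hfun m Q p.2 ≤ Gfun n P U' + Hfun m Q V' := by
    intro U' V' hfeas
    have hFp : F p = Gfun n P p.1 + Hfun m Q p.2 := rfl
    have hFq : F (U', V') = Gfun n P U' + Hfun m Q V' := rfl
    by_cases hle : F (U', V') ≤ A
    · have := hpmin' (U', V') ⟨hfeas, hle⟩
      rw [hFp, hFq] at this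
      exact this
    · push_neg at hle
      have h1 : F p ≤ A := hpK.2
      rw [hFp] at h1
      rw [hFq] at hle
      linarith
  refine ⟨p, ⟨hpfeas, hpopt⟩, ?_⟩
  rintro q ⟨hqfeas, hqopt⟩
  by_contra hne
  have hFeq : Gfun n P q.1 + Hfun m Q q.2 = Gfun n P p.1 + Hfun m Q p.2 :=
    le_antisymm (hqopt p.1 p.2 hpfeas) (hpopt q.1 q.2 hqfeas)
  set MU : X → Y → ℝ := fun x y => (p.1 x y + q.1 x y) / 2 with hMU
  set MV : X → Y → ℝ := fun x y => (p.2 x y + q.2 x y) / 2 with hMV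
  have hMfeas : ∀ x y, MU x y + MV x y ≥ Φ x y - w (zm y) := by
    intro x y
    have h1 := hpfeas x y
    have h2 := hqfeas x y
    simp only [hMU, hMV]
    linarith
  have hges : Gfun n P p.1 + Hfun m Q p.2 ≤ Gfun n P MU + Hfun m Q MV := hpopt MU MV hMfeas
  have hGmid : ∀ x, ∫ ε, esup (Uhat MU x) ε ∂(P x)
      ≤ ((∫ ε, esup (Uhat p.1 x) ε ∂(P x)) + ∫ ε, esup (Uhat q.1 x) ε ∂(P x)) / 2 := by
    intro x
    have h := emax_mid_le (hPint x) (Uhat p.1 x) (Uhat q.1 x)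
    rwa [← Uhat_mid p.1 q.1 x] at h
  have hHmid : ∀ y, ∫ η, esup (Vhat MV y) η ∂(Q y)
      ≤ ((∫ η, esup (Vhat p.2 y) η ∂(Q y)) + ∫ η, esup (Vhat q.2 y) η ∂(Q y)) / 2 := by
    intro y
    have h := emax_mid_le (hQint y) (Vhat p.2 y) (Vhat q.2 y)
    rwa [← Vhat_mid p.2 q.2 y] at h
  have hGhalf : (Gfun n P p.1 + Gfun n P q.1) / 2
      = ∑ x, n x * (((∫ ε, esup (Uhat p.1 x) ε ∂(P x)) + ∫ ε, esup (Uhat q.1 x) ε ∂(P x)) / 2) := by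
    rw [Gfun_eq n P p.1, Gfun_eq n P q.1, ← Finset.sum_add_distrib, Finset.sum_div]
    exact Finset.sum_congr rfl fun x _ => by ring
  have hHhalf : (Hfun m Q p.2 + Hfun m Q q.2) / 2
      = ∑ y, m y * (((∫ η, esup (Vhat p.2 y) η ∂(Q y)) + ∫ η, esup (Vhat q.2 y) η ∂(Q y)) / 2) := by
    rw [Hfun_eq m Q p.2, Hfun_eq m Q q.2, ← Finset.sum_add_distrib, Finset.sum_div]
    exact Finset.sum_congr rfl fun y _ => by ring
  have hGsum : Gfun n P MU ≤ (Gfun n P p.1 + Gfun n P q.1) / 2 := by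
    rw [hGhalf, Gfun_eq n P MU]
    exact Finset.sum_le_sum fun x _ => mul_le_mul_of_nonneg_left (hGmid x) (hn x).le
  have hHsum : Hfun m Q MV ≤ (Hfun m Q p.2 + Hfun m Q q.2) / 2 := by
    rw [hHhalf, Hfun_eq m Q MV]
    exact Finset.sum_le_sum fun y _ => mul_le_mul_of_nonneg_left (hHmid y) (hm y).le
  have hGeq : Gfun n P MU = (Gfun n P p.1 + Gfun n P q.1) / 2 := by linarith
  have hHeq : Hfun m Q MV = (Hfun m Q p.2 + Hfun m Q q.2) / 2 := by linarith
  -- strict convexity contradiction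
  have hUcase : p.1 = q.1 := by
    by_contra hU
    have hxy : ∃ x0 y0, p.1 x0 y0 ≠ q.1 x0 y0 := by
      by_contra h
      push_neg at h
      exact hU (funext fun x => funext fun y => h x y)
    obtain ⟨x0, y0, hd⟩ := hxy
    have hsum_eq : ∑ x, n x * ∫ ε, esup (Uhat MU x) ε ∂(P x)
        = ∑ x, n x * (((∫ ε, esup (Uhat p.1 x) ε ∂(P x))
          + ∫ ε, esup (Uhat q.1 x) ε ∂(P x)) / 2) := by
      rw [← Gfun_eq n P MU, hGeq, hGhalf]
    have hterm := (Finset.sum_eq_sum_iff_of_le fun x _ =>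
      mul_le_mul_of_nonneg_left (hGmid x) (hn x).le).1 hsum_eq x0 (Finset.mem_univ x0)
    have hmid_eq : ∫ ε, esup (Uhat MU x0) ε ∂(P x0)
        = ((∫ ε, esup (Uhat p.1 x0) ε ∂(P x0)) + ∫ ε, esup (Uhat q.1 x0) ε ∂(P x0)) / 2 :=
      mul_left_cancel₀ (hn x0).ne' hterm
    rw [Uhat_mid p.1 q.1 x0] at hmid_eq
    have hnone : (none : Option Y) ≠ some y0 := by simp
    rcases lt_or_gt_of_ne hd with hlt | hlt
    · exact emax_strict (hPint x0) (hPpos x0) hnone rfl rfl hlt hmid_eq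
    · have hmid_eq' : ∫ ε, esup (fun a => (Uhat q.1 x0 a + Uhat p.1 x0 a) / 2) ε ∂(P x0)
          = ((∫ ε, esup (Uhat q.1 x0) ε ∂(P x0)) + ∫ ε, esup (Uhat p.1 x0) ε ∂(P x0)) / 2 := by
        have hfe : (fun a => (Uhat q.1 x0 a + Uhat p.1 x0 a) / 2)
            = fun a => (Uhat p.1 x0 a + Uhat q.1 x0 a) / 2 := by
          funext a; ring
        rw [hfe, hmid_eq]; ring
      exact emax_strict (hPint x0) (hPpos x0) hnone rfl rfl hlt hmid_eq'
  have hVcase : p.2 = q.2 := by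
    by_contra hV
    have hxy : ∃ x0 y0, p.2 x0 y0 ≠ q.2 x0 y0 := by
      by_contra h
      push_neg at h
      exact hV (funext fun x => funext fun y => h x y)
    obtain ⟨x0, y0, hd⟩ := hxy
    have hsum_eq : ∑ y, m y * ∫ η, esup (Vhat MV y) η ∂(Q y)
        = ∑ y, m y * (((∫ η, esup (Vhat p.2 y) η ∂(Q y))
          + ∫ η, esup (Vhat q.2 y) η ∂(Q y)) / 2) := by
      rw [← Hfun_eq m Q MV, hHeq, hHhalf]
    have hterm := (Finset.sum_eq_sum_iff_of_le fun y _ =>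
      mul_le_mul_of_nonneg_left (hHmid y) (hm y).le).1 hsum_eq y0 (Finset.mem_univ y0)
    have hmid_eq : ∫ η, esup (Vhat MV y0) η ∂(Q y0)
        = ((∫ η, esup (Vhat p.2 y0) η ∂(Q y0)) + ∫ η, esup (Vhat q.2 y0) η ∂(Q y0)) / 2 :=
      mul_left_cancel₀ (hm y0).ne' hterm
    rw [Vhat_mid p.2 q.2 y0] at hmid_eq
    have hnone : (none : Option X) ≠ some x0 := by simp
    rcases lt_or_gt_of_ne hd with hlt | hlt
    · exact emax_strict (hQint y0) (hQpos y0) hnone rfl rfl hlt hmid_eq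
    · have hmid_eq' : ∫ η, esup (fun a => (Vhat q.2 y0 a + Vhat p.2 y0 a) / 2) η ∂(Q y0)
          = ((∫ η, esup (Vhat q.2 y0) η ∂(Q y0)) + ∫ η, esup (Vhat p.2 y0) η ∂(Q y0)) / 2 := by
        have hfe : (fun a => (Vhat q.2 y0 a + Vhat p.2 y0 a) / 2)
            = fun a => (Vhat p.2 y0 a + Vhat q.2 y0 a) / 2 := by
          funext a; ring
        rw [hfe, hmid_eq]; ring
      exact emax_strict (hQint y0) (hQpos y0) hnone rfl rfl hlt hmid_eq'
  exact hne (Prod.ext hUcase.symm hVcase.symm)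


end
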